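/- Let T: 𝕋 → 𝕋 be a continuous map that is monotone increasing on each interval [x_k, x_{k+1}) of a partition 0 = x₀ < ⋯ < x_d = 1, with T(x_k) = 0 and left limit 1 at x_{k+1}. Let ι be the itinerary map into {0,…,d−1}^ℕ with the product topology. If x₀ ∈ 𝕋 has itinerary ι(x₀) not terminating in an infinite string of 0's, then ι is continuous at x₀. -/
import Mathlib


open Set Filter MeasureTheory

noncomputable def rep (z : UnitAddCircle) : ℝ := (AddCircle.equivIco 1 0 z : ℝ)

def MinimalOn (T : UnitAddCircle → UnitAddCircle) (X : Set UnitAddCircle) : Prop :=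
  ∀ x ∈ X, ∀ y ∈ X, y ∈ closure {z : UnitAddCircle | ∃ n : ℕ, T^[n] x = z}

def PreservesCyclicOrder (T : UnitAddCircle → UnitAddCircle) (X : Set UnitAddCircle) : Prop :=
  ∀ p ∈ X, ∀ q ∈ X, ∀ r ∈ X,
    T p ≠ T q → T q ≠ T r → T r ≠ T p →
    sbtw p q r → sbtw (T p) (T q) (T r)

def IsRotational (T : UnitAddCircle → UnitAddCircle) (X : Set UnitAddCircle) : Prop :=
  IsClosed X ∧ Set.MapsTo T X X ∧ MinimalOn T X ∧ PreservesCyclicOrder T X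

lemma rep_coe_self (z : UnitAddCircle) : ((rep z : ℝ) : UnitAddCircle) = z :=
  (AddCircle.equivIco 1 0).symm_apply_apply z

lemma rep_coe (r : ℝ) : rep ((r : ℝ) : UnitAddCircle) = Int.fract r := by
  have := AddCircle.coe_equivIco_mk_apply (𝕜 := ℝ) (p := 1) r
  simpa [rep] using this

theorem itinerary_continuous_at
    (d : ℕ) (hd : 0 < d)
    (x : Fin (d + 1) → ℝ) (hxmono : StrictMono x)
    (hx0 : x 0 = 0) (hx1 : x (Fin.last d) = 1)
    (T : UnitAddCircle → UnitAddCircle) (hT : Continuous T)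
    (hTmono : ∀ k : Fin d, ∀ r s : ℝ,
        r ∈ Set.Ico (x k.castSucc) (x k.succ) → s ∈ Set.Ico (x k.castSucc) (x k.succ) →
        r ≤ s → rep (T ((r : ℝ) : UnitAddCircle)) ≤ rep (T ((s : ℝ) : UnitAddCircle)))
    (hT0 : ∀ k : Fin d, T ((x k.castSucc : ℝ) : UnitAddCircle) = 0)
    (hT1 : ∀ k : Fin d, Tendsto (fun r : ℝ => rep (T ((r : ℝ) : UnitAddCircle)))
        (nhdsWithin (x k.succ) (Set.Iio (x k.succ))) (nhds 1))
    (ι : UnitAddCircle → ℕ → Fin d)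
    (hι : ∀ z : UnitAddCircle, ∀ n : ℕ, ∀ kk : Fin d,
        ι z n = kk ↔ rep (T^[n] z) ∈ Set.Ico (x kk.castSucc) (x kk.succ))
    (z₀ : UnitAddCircle) (hz₀ : ∀ N : ℕ, ∃ n ≥ N, ((ι z₀ n : ℕ) ≠ 0)) :
    ContinuousAt ι z₀ := by
  have kzero : (⟨0, hd⟩ : Fin d).castSucc = (0 : Fin (d + 1)) := rfl
  -- T fixes 0
  have hT00 : T 0 = 0 := by
    have := hT0 ⟨0, hd⟩
    rw [kzero, hx0] at this
    simpa using this
  have hrep0 : rep (0 : UnitAddCircle) = 0 := by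
    have : ((0 : ℝ) : UnitAddCircle) = 0 := by simp
    rw [← this, rep_coe]; simp
  -- key: the orbit never hits a left endpoint
  have key : ∀ n : ℕ, x ((ι z₀ n).castSucc) < rep (T^[n] z₀) := by
    intro n
    have hmem := (hι z₀ n (ι z₀ n)).mp rfl
    rcases lt_or_eq_of_le hmem.1 with h | h
    · exact h
    exfalso
    -- then T^[n] z₀ is the endpoint, and the orbit is 0 afterwards
    have horb : T^[n] z₀ = ((x ((ι z₀ n).castSucc) : ℝ) : UnitAddCircle) := by
      rw [← rep_coe_self (T^[n] z₀), ← h]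
    have hzero : ∀ m : ℕ, T^[n + 1 + m] z₀ = 0 := by
      intro m
      induction m with
      | zero =>
        have : T^[n + 1] z₀ = T (T^[n] z₀) := Function.iterate_succ_apply' T n z₀
        rw [this, horb, hT0]
      | succ m ih =>
        have : T^[n + 1 + (m + 1)] z₀ = T (T^[n + 1 + m] z₀) :=
          Function.iterate_succ_apply' T _ z₀
        rw [this, ih, hT00]
    obtain ⟨m, hm, hmne⟩ := hz₀ (n + 1)
    apply hmne
    have hz : T^[m] z₀ = 0 := by
      obtain ⟨j, rfl⟩ := Nat.exists_eq_add_of_le hm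
      exact hzero j
    have : ι z₀ m = ⟨0, hd⟩ := by
      rw [hι z₀ m ⟨0, hd⟩, hz, hrep0, kzero, hx0]
      exact ⟨le_refl _, by rw [← hx0]; exact hxmono (by simp [Fin.lt_def])⟩
    rw [this]
  rw [continuousAt_pi]
  intro n
  set k := ι z₀ n with hk
  have hmem := (hι z₀ n k).mp rfl
  have hmemo : rep (T^[n] z₀) ∈ Set.Ioo (x k.castSucc) (x k.succ) := ⟨key n, hmem.2⟩
  have hx0le : (0 : ℝ) ≤ x k.castSucc := by rw [← hx0]; exact hxmono.monotone (Fin.zero_le _)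
  have hne : T^[n] z₀ ≠ ((0 : ℝ) : UnitAddCircle) := by
    intro hcon
    have : rep (T^[n] z₀) = 0 := by rw [hcon, rep_coe]; simp
    linarith [hmemo.1]
  have hcont : ContinuousAt (fun z => rep (T^[n] z)) z₀ := by
    have h1 : ContinuousAt (fun z : UnitAddCircle => rep z) (T^[n] z₀) :=
      continuous_subtype_val.continuousAt.comp (AddCircle.continuousAt_equivIco 1 0 hne)
    exact h1.comp ((hT.iterate n).continuousAt)
  have hev : ∀ᶠ z in nhds z₀, rep (T^[n] z) ∈ Set.Ioo (x k.castSucc) (x k.succ) :=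
    hcont (isOpen_Ioo.mem_nhds hmemo)
  have : (fun z => ι z n) =ᶠ[nhds z₀] fun _ => k := by
    filter_upwards [hev] with z hz
    exact (hι z n k).mpr ⟨hz.1.le, hz.2⟩
  exact this.continuousAt
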